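/- Let m ≥ 1, n = 2^m, d ≥ 1. Let φ : (ZMod n)^d → ℤ be the flattening map φ(f) = ∑_{q=1}^d rep(f_q)·n^{q−1}, where rep(f_q) ∈ {0,…,n−1} is the standard representative. Let I be a nonempty finite index set, and for each i ∈ I let l_i be an integer with 0 ≤ l_i ≤ d·m and a_i an integer with 0 ≤ a_i < 2^{l_i}, and let the frequency cone C_i = {f ∈ (ZMod n)^d : φ(f) ≡ a_i (mod 2^{l_i})}. Assume the cones C_i are pairwise disjoint. Fix i* ∈ I and set w = |{ν₂(a_{i*} − a_i) : i ∈ I, i ≠ i*}|. Then there exists G : (ZMod n)^d → ℂ whose support has cardinality exactly 2^w and whose d-dimensional discrete Fourier transform satisfies Ĝ(f) = 1 for every f ∈ C_{i*} and Ĝ(f) = 0 for every f ∈ ⋃_{i ∈ I, i ≠ i*} C_i. -/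

import Mathlib

open scoped BigOperators

/-- The `d`-dimensional discrete Fourier transform on `(ZMod n)^d`. -/
noncomputable def dft (n d : ℕ) [NeZero n] (x : (Fin d → ZMod n) → ℂ) :
    (Fin d → ZMod n) → ℂ :=
  fun f => ∑ t : Fin d → ZMod n, x t *
    Complex.exp (-(2 * (Real.pi : ℂ) * Complex.I) *
      (((∑ q, f q * t q : ZMod n)).val : ℂ) / (n : ℂ))

/-- The flattening map `φ(f) = ∑_q rep(f_q) · n^{q-1}`. -/
def flatten (n d : ℕ) (f : Fin d → ZMod n) : ℤ :=
  ∑ q : Fin d, ((f q).val : ℤ) * (n : ℤ) ^ (q : ℕ)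


noncomputable def Dc (s : ℕ) (x : ℤ) : ℂ :=
  Complex.exp (-(2 * (Real.pi : ℂ) * Complex.I) * (x : ℂ) / ((2:ℂ) ^ s))

lemma two_pow_ne (s : ℕ) : ((2:ℂ) ^ s) ≠ 0 := pow_ne_zero _ two_ne_zero

lemma Dc_add (s : ℕ) (x y : ℤ) : Dc s (x + y) = Dc s x * Dc s y := by
  rw [Dc, Dc, Dc, ← Complex.exp_add]
  congr 1
  push_cast
  field_simp
  ring

lemma Dc_zero (s : ℕ) : Dc s 0 = 1 := by simp [Dc]

lemma Dc_ne_zero (s : ℕ) (x : ℤ) : Dc s x ≠ 0 := Complex.exp_ne_zero _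

lemma Dc_period (s : ℕ) (x k : ℤ) : Dc s (x + 2 ^ s * k) = Dc s x := by
  rw [Dc_add]
  have : Dc s (2 ^ s * k) = 1 := by
    rw [Dc]
    have : -(2 * (Real.pi : ℂ) * Complex.I) * ((2 ^ s * k : ℤ) : ℂ) / ((2:ℂ) ^ s)
        = (-k : ℤ) * (2 * (Real.pi : ℂ) * Complex.I) := by
      push_cast
      field_simp
    rw [this, Complex.exp_int_mul_two_pi_mul_I]
  rw [this, mul_one]

lemma Dc_pow_mul (s u : ℕ) (x : ℤ) : Dc (s + u) (x * 2 ^ u) = Dc s x := by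
  rw [Dc, Dc]
  congr 1
  push_cast
  rw [pow_add]
  field_simp

lemma Dc_shift_odd (s : ℕ) (x : ℤ) {k : ℤ} (hk : Odd k) :
    Dc (s + 1) (x + 2 ^ s * k) = - Dc (s + 1) x := by
  rw [Dc_add]
  have h1 : Dc (s + 1) (2 ^ s * k) = -1 := by
    rw [Dc]
    have : -(2 * (Real.pi : ℂ) * Complex.I) * ((2 ^ s * k : ℤ) : ℂ) / ((2:ℂ) ^ (s+1))
        = (-k : ℤ) * ((Real.pi : ℂ) * Complex.I) := by
      push_cast
      rw [pow_succ]
      field_simp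
    rw [this, Complex.exp_int_mul, Complex.exp_pi_mul_I]
    exact Odd.neg_one_zpow hk.neg
  rw [h1]
  ring

lemma Dc_natMod (s : ℕ) (v : ℕ) : Dc s ((v % 2 ^ s : ℕ) : ℤ) = Dc s (v : ℤ) := by
  conv_rhs => rw [show (v : ℤ) = ((v % 2^s : ℕ) : ℤ) + 2 ^ s * ((v / 2^s : ℕ) : ℤ) by
    exact_mod_cast (Nat.mod_add_div v (2^s)).symm]
  rw [Dc_period]

noncomputable def ch (m : ℕ) (a : ZMod (2 ^ m)) : ℂ :=
  Complex.exp (-(2 * (Real.pi : ℂ) * Complex.I) * (a.val : ℂ) / ((2 ^ m : ℕ) : ℂ))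

variable (m : ℕ) [NeZero (2 ^ m)]

lemma ch_eq_Dc (a : ZMod (2 ^ m)) : ch m a = Dc m (a.val : ℤ) := by
  rw [ch, Dc]; congr 2 <;> push_cast <;> ring

lemma ch_natCast (x : ℕ) : ch m ((x : ℕ) : ZMod (2 ^ m)) = Dc m (x : ℤ) := by
  rw [ch_eq_Dc, ZMod.val_natCast, Dc_natMod]

lemma ch_add (a b : ZMod (2 ^ m)) : ch m (a + b) = ch m a * ch m b := by
  have ha : ((a.val : ℕ) : ZMod (2 ^ m)) = a := ZMod.natCast_rightInverse a
  have hb : ((b.val : ℕ) : ZMod (2 ^ m)) = b := ZMod.natCast_rightInverse b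
  rw [← ha, ← hb, ← Nat.cast_add, ch_natCast, ch_natCast, ch_natCast, ← Dc_add]
  norm_num

lemma ch_zero : ch m (0 : ZMod (2 ^ m)) = 1 := by
  rw [ch_eq_Dc, ZMod.val_zero]; exact Dc_zero m

lemma ch_sum {γ : Type*} (s : Finset γ) (g : γ → ZMod (2 ^ m)) :
    ch m (∑ i ∈ s, g i) = ∏ i ∈ s, ch m (g i) := by
  classical
  induction s using Finset.cons_induction with
  | empty => simpa using ch_zero m
  | cons x s hx ih =>
    rw [Finset.sum_cons, Finset.prod_cons, ch_add, ih]

lemma geo_bound (M : ℕ) : ∑ j ∈ Finset.range M, 2 ^ j < 2 ^ M := by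
  induction M with
  | zero => simp
  | succ M ih => rw [Finset.sum_range_succ, pow_succ]; omega

lemma sum_two_pow_lt {M : ℕ} {A : Finset ℕ} (hA : A ⊆ Finset.range M) :
    ∑ j ∈ A, 2 ^ j < 2 ^ M :=
  lt_of_le_of_lt (Finset.sum_le_sum_of_subset hA) (geo_bound M)

lemma binrep : ∀ (M : ℕ) (A B : Finset ℕ), A ⊆ Finset.range M → B ⊆ Finset.range M →
    (∑ j ∈ A, 2 ^ j) = (∑ j ∈ B, 2 ^ j) → A = B := by
  intro M
  induction M with
  | zero =>
    intro A B hA hB _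
    simp only [Finset.range_zero, Finset.subset_empty] at hA hB
    rw [hA, hB]
  | succ M ih =>
    intro A B hA hB h
    have hAe : A.erase M ⊆ Finset.range M := by
      intro x hx
      have h1 := Finset.mem_of_mem_erase hx
      have h2 := Finset.ne_of_mem_erase hx
      have := hA h1
      simp only [Finset.mem_range] at this ⊢
      omega
    have hBe : B.erase M ⊆ Finset.range M := by
      intro x hx
      have h1 := Finset.mem_of_mem_erase hx
      have h2 := Finset.ne_of_mem_erase hx
      have := hB h1
      simp only [Finset.mem_range] at this ⊢
      omega
    have hAs : ∑ j ∈ A, 2 ^ j = (∑ j ∈ A.erase M, 2 ^ j) + (if M ∈ A then 2 ^ M else 0) := by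
      by_cases hM : M ∈ A
      · rw [if_pos hM, ← Finset.add_sum_erase _ _ hM]; ring
      · rw [if_neg hM, Finset.erase_eq_of_notMem hM, add_zero]
    have hBs : ∑ j ∈ B, 2 ^ j = (∑ j ∈ B.erase M, 2 ^ j) + (if M ∈ B then 2 ^ M else 0) := by
      by_cases hM : M ∈ B
      · rw [if_pos hM, ← Finset.add_sum_erase _ _ hM]; ring
      · rw [if_neg hM, Finset.erase_eq_of_notMem hM, add_zero]
    have hAlt := sum_two_pow_lt hAe
    have hBlt := sum_two_pow_lt hBe
    rw [hAs, hBs] at h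
    have hMAB : (M ∈ A ↔ M ∈ B) ∧ (∑ j ∈ A.erase M, 2 ^ j = ∑ j ∈ B.erase M, 2 ^ j) := by
      by_cases h1 : M ∈ A <;> by_cases h2 : M ∈ B
      · rw [if_pos h1, if_pos h2] at h
        exact ⟨by tauto, by omega⟩
      · rw [if_pos h1, if_neg h2] at h
        exact absurd h (by omega)
      · rw [if_neg h1, if_pos h2] at h
        exact absurd h (by omega)
      · rw [if_neg h1, if_neg h2] at h
        exact ⟨by tauto, by omega⟩
    obtain ⟨hiff, hsums⟩ := hMAB
    have heq := ih _ _ hAe hBe hsums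
    ext x
    by_cases hx : x = M
    · subst hx; exact hiff
    · constructor
      · intro hxa
        have : x ∈ A.erase M := Finset.mem_erase.mpr ⟨hx, hxa⟩
        rw [heq] at this
        exact Finset.mem_of_mem_erase this
      · intro hxb
        have : x ∈ B.erase M := Finset.mem_erase.mpr ⟨hx, hxb⟩
        rw [← heq] at this
        exact Finset.mem_of_mem_erase this

 set_option linter.unusedSectionVars false
section FlatArith

variable (m d : ℕ) [NeZero (2 ^ m)]

/-- digit extraction -/
def dig (f : Fin d → ZMod (2 ^ m)) (q : ℕ) : ℕ :=
  if h : q < d then (f ⟨q, h⟩).val else 0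

lemma dig_lt (f : Fin d → ZMod (2 ^ m)) (q : ℕ) : dig m d f q < 2 ^ m := by
  unfold dig
  split
  · exact ZMod.val_lt _
  · exact pow_pos (by norm_num) m

lemma flatten_eq_natSum (f : Fin d → ZMod (2 ^ m)) :
    flatten (2 ^ m) d f = ((∑ q ∈ Finset.range d, dig m d f q * 2 ^ (m * q) : ℕ) : ℤ) := by
  rw [flatten]
  rw [← Fin.sum_univ_eq_sum_range (fun q => (dig m d f q * 2 ^ (m * q) : ℕ)) d]
  rw [Nat.cast_sum]
  apply Finset.sum_congr rfl
  intro q _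
  rw [dig, dif_pos q.isLt, Fin.eta]
  push_cast [pow_mul]
  ring

lemma partial_lt (f : Fin d → ZMod (2 ^ m)) (k : ℕ) :
    ∑ q ∈ Finset.range k, dig m d f q * 2 ^ (m * q) < 2 ^ (m * k) := by
  induction k with
  | zero => simp
  | succ k ih =>
    rw [Finset.sum_range_succ, Nat.mul_succ, pow_add]
    have hd : dig m d f k * 2 ^ (m * k) ≤ (2 ^ m - 1) * 2 ^ (m * k) :=
      Nat.mul_le_mul_right _ (by have := dig_lt m d f k; omega)
    have hc : (2 ^ m - 1) * 2 ^ (m * k) + 2 ^ (m * k) = 2 ^ (m * k) * 2 ^ m := by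
      rw [Nat.sub_mul, one_mul, Nat.sub_add_cancel (Nat.le_mul_of_pos_left _ (pow_pos (by norm_num) m))]
      ring
    omega

lemma flatten_div (f : Fin d → ZMod (2 ^ m)) (e : ℕ) (He : e / m < d) :
    ∃ H : ℕ, flatten (2 ^ m) d f / 2 ^ (m * (e / m))
      = ((f ⟨e / m, He⟩).val : ℤ) + 2 ^ m * H := by
  set q₀ := e / m with hq₀
  -- nat level decomposition
  set L := ∑ q ∈ Finset.range q₀, dig m d f q * 2 ^ (m * q) with hL
  set H₀ := ∑ q ∈ Finset.Ico (q₀ + 1) d, dig m d f q * 2 ^ (m * (q - (q₀ + 1))) with hH₀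
  have hsplit : ∑ q ∈ Finset.range d, dig m d f q * 2 ^ (m * q)
      = L + (dig m d f q₀ + 2 ^ m * H₀) * 2 ^ (m * q₀) := by
    rw [← Finset.sum_range_add_sum_Ico _ (Nat.succ_le_of_lt He), Finset.sum_range_succ]
    have hIco : ∑ q ∈ Finset.Ico (q₀ + 1) d, dig m d f q * 2 ^ (m * q)
        = 2 ^ (m * (q₀ + 1)) * H₀ := by
      rw [hH₀, Finset.mul_sum]
      apply Finset.sum_congr rfl
      intro q hq
      rw [Finset.mem_Ico] at hq
      have hle : q₀ + 1 ≤ q := hq.1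
      have : m * (q₀ + 1) + m * (q - (q₀ + 1)) = m * q := by
        rw [← Nat.mul_add, Nat.add_sub_cancel' hle]
      calc dig m d f q * 2 ^ (m * q) = dig m d f q * (2 ^ (m * (q₀ + 1)) * 2 ^ (m * (q - (q₀ + 1)))) := by
            rw [← pow_add, this]
        _ = 2 ^ (m * (q₀ + 1)) * (dig m d f q * 2 ^ (m * (q - (q₀ + 1)))) := by ring
    rw [hIco, Nat.mul_succ, pow_add]
    ring
  have hLlt : L < 2 ^ (m * q₀) := partial_lt m d f q₀
  have hdivN : (∑ q ∈ Finset.range d, dig m d f q * 2 ^ (m * q)) / 2 ^ (m * q₀)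
      = dig m d f q₀ + 2 ^ m * H₀ := by
    rw [hsplit, Nat.add_mul_div_right _ _ (pow_pos (by norm_num) _),
      Nat.div_eq_of_lt hLlt, zero_add]
  refine ⟨H₀, ?_⟩
  rw [flatten_eq_natSum]
  have : ((2:ℤ) ^ (m * q₀)) = ((2 ^ (m * q₀) : ℕ) : ℤ) := by push_cast; ring
  rw [this, ← Int.natCast_ediv, hdivN]
  push_cast
  rw [dig, dif_pos He]

section More

variable (m d : ℕ) [NeZero (2 ^ m)]

/-- the delta-support vectors -/
def tvec (e : ℕ) : Fin d → ZMod (2 ^ m) :=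
  fun q => if e / m = (q : ℕ) then (2 : ZMod (2 ^ m)) ^ (m - 1 - e % m) else 0

lemma ch_tvec (hm : 0 < m) (e : ℕ) (He : e / m < d) (f : Fin d → ZMod (2 ^ m)) :
    ch m (∑ q, f q * tvec m d e q)
      = Dc (e % m + 1) (flatten (2 ^ m) d f / 2 ^ (m * (e / m))) := by
  have hr : e % m < m := Nat.mod_lt _ hm
  set qF : Fin d := ⟨e / m, He⟩ with hqF
  have hsum : (∑ q, f q * tvec m d e q) = f qF * (2 : ZMod (2 ^ m)) ^ (m - 1 - e % m) := by
    rw [Finset.sum_eq_single qF]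
    · rw [tvec]; rw [if_pos rfl]
    · intro q _ hq
      rw [tvec, if_neg, mul_zero]
      intro hqe
      exact hq (Fin.ext hqe.symm)
    · intro h; exact absurd (Finset.mem_univ qF) h
  rw [hsum]
  have hcast : f qF * (2 : ZMod (2 ^ m)) ^ (m - 1 - e % m)
      = (((f qF).val * 2 ^ (m - 1 - e % m) : ℕ) : ZMod (2 ^ m)) := by
    have ha : (((f qF).val : ℕ) : ZMod (2 ^ m)) = f qF := ZMod.natCast_rightInverse _
    push_cast
    rw [ha]
  rw [hcast, ch_natCast]
  have hsplit : (e % m + 1) + (m - 1 - e % m) = m := by omega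
  have hpm := Dc_pow_mul (e % m + 1) (m - 1 - e % m) ((f qF).val : ℤ)
  rw [hsplit] at hpm
  rw [show (((f qF).val * 2 ^ (m - 1 - e % m) : ℕ) : ℤ)
      = ((f qF).val : ℤ) * 2 ^ (m - 1 - e % m) by push_cast; ring, hpm]
  obtain ⟨H, hH⟩ := flatten_div m d f e He
  rw [hH]
  rw [show ((f qF).val : ℤ) + 2 ^ m * (H : ℤ)
      = ((f qF).val : ℤ) + 2 ^ (e % m + 1) * (2 ^ (m - 1 - e % m) * (H : ℤ)) by
    rw [← mul_assoc, ← pow_add, hsplit], Dc_period]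

lemma digits_expand (b : ℕ) (hb : 0 < b) :
    ∀ (k y : ℕ), y < b ^ k → ∑ q ∈ Finset.range k, (y / b ^ q % b) * b ^ q = y := by
  intro k
  induction k with
  | zero =>
    intro y hy
    rw [pow_zero] at hy
    simp
    omega
  | succ k ih =>
    intro y hy
    rw [Finset.sum_range_succ']
    have hterm : ∀ q, y / b ^ (q + 1) % b * b ^ (q + 1) = b * ((y / b) / b ^ q % b * b ^ q) := by
      intro q
      rw [pow_succ', Nat.div_div_eq_div_mul, ← pow_succ']
      ring
    rw [Finset.sum_congr rfl (fun q _ => hterm q), ← Finset.mul_sum]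
    have hylt : y / b < b ^ k := by
      rw [Nat.div_lt_iff_lt_mul hb, ← pow_succ]
      exact hy
    rw [ih (y / b) hylt, pow_zero, Nat.div_one, mul_one, add_comm, Nat.mod_add_div]

lemma exists_flatten (x : ℤ) (h0 : 0 ≤ x) (hx : x < 2 ^ (d * m)) :
    ∃ f : Fin d → ZMod (2 ^ m), flatten (2 ^ m) d f = x := by
  have hb : 0 < 2 ^ m := pow_pos (by norm_num) m
  set y : ℕ := x.toNat with hy
  have hxy : (y : ℤ) = x := Int.toNat_of_nonneg h0
  have hylt : y < (2 ^ m) ^ d := by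
    have : ((2:ℤ) ^ (d * m)) = (((2 ^ m) ^ d : ℕ) : ℤ) := by push_cast; rw [← pow_mul]; ring_nf
    rw [this, ← hxy] at hx
    exact_mod_cast hx
  refine ⟨fun q => ((y / (2 ^ m) ^ (q : ℕ) % 2 ^ m : ℕ) : ZMod (2 ^ m)), ?_⟩
  rw [flatten]
  have hterm : ∀ q : Fin d, ((((y / (2 ^ m) ^ (q : ℕ) % 2 ^ m : ℕ) : ZMod (2 ^ m))).val : ℤ)
      * ((2 ^ m : ℕ) : ℤ) ^ (q : ℕ)
      = (((y / (2 ^ m) ^ (q : ℕ) % 2 ^ m) * (2 ^ m) ^ (q : ℕ) : ℕ) : ℤ) := by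
    intro q
    rw [ZMod.val_cast_of_lt (Nat.mod_lt _ hb)]
    push_cast
    ring
  rw [Finset.sum_congr rfl (fun q _ => hterm q), ← Nat.cast_sum,
    Fin.sum_univ_eq_sum_range (fun q => ((y / (2 ^ m) ^ q % 2 ^ m) * (2 ^ m) ^ q : ℕ)) d,
    digits_expand (2 ^ m) hb d y hylt, hxy]

end More

set_option maxHeartbeats 1000000 in
theorem stmt3 (m : ℕ) (hm : 1 ≤ m) (n : ℕ) (hn : n = 2 ^ m) [NeZero n]
    (d : ℕ) (hd : 1 ≤ d)
    {ι : Type} [Fintype ι] [Nonempty ι] [DecidableEq ι]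
    (l : ι → ℕ) (hl : ∀ i, l i ≤ d * m)
    (a : ι → ℤ) (ha0 : ∀ i, 0 ≤ a i) (ha : ∀ i, a i < 2 ^ l i)
    (C : ι → Set (Fin d → ZMod n))
    (hC : ∀ i, C i = {f : Fin d → ZMod n | flatten n d f % 2 ^ l i = a i})
    (hdisj : Pairwise (fun i j => Disjoint (C i) (C j)))
    (istar : ι)
    (w : ℕ)
    (hw : w = ((Finset.univ.erase istar).image
      (fun i => padicValInt 2 (a istar - a i))).card) :
    ∃ G : (Fin d → ZMod n) → ℂ,
      (Function.support G).ncard = 2 ^ w ∧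
      (∀ f ∈ C istar, dft n d G f = 1) ∧
      (∀ i, i ≠ istar → ∀ f ∈ C i, dft n d G f = 0) := by
  subst hn
  haveI : Fact (Nat.Prime 2) := ⟨Nat.prime_two⟩
  have hm0 : 0 < m := hm
  classical
  set E : Finset ℕ := (Finset.univ.erase istar).image
      (fun i => padicValInt 2 (a istar - a i)) with hE
  -- disjointness consequence
  have hkey : ∀ i, i ≠ istar → ¬ ((2:ℤ) ^ (min (l i) (l istar)) ∣ (a istar - a i)) := by
    intro i hi hdvd
    set x : ℤ := if l i ≤ l istar then a istar else a i with hx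
    have hx0 : 0 ≤ x := by rw [hx]; split <;> [exact ha0 istar; exact ha0 i]
    have hxlt : x < 2 ^ (d * m) := by
      rw [hx]; split
      · exact lt_of_lt_of_le (ha istar) (pow_le_pow_right₀ (by norm_num) (hl istar))
      · exact lt_of_lt_of_le (ha i) (pow_le_pow_right₀ (by norm_num) (hl i))
    have hmodi : x % 2 ^ (l i) = a i := by
      rw [hx]; split
      · next hle =>
        have h1 : (2:ℤ) ^ (l i) ∣ (a istar - a i) := by
          rw [min_eq_left hle] at hdvd; exact hdvd
        rw [Int.emod_eq_emod_iff_emod_sub_eq_zero.mpr (Int.emod_eq_zero_of_dvd h1),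
          Int.emod_eq_of_lt (ha0 i) (ha i)]
      · exact Int.emod_eq_of_lt (ha0 i) (ha i)
    have hmods : x % 2 ^ (l istar) = a istar := by
      rw [hx]; split
      · exact Int.emod_eq_of_lt (ha0 istar) (ha istar)
      · next hle =>
        have hle' : l istar ≤ l i := le_of_not_ge hle
        have h1 : (2:ℤ) ^ (l istar) ∣ (a i - a istar) := by
          rw [min_eq_right hle'] at hdvd
          rw [show a i - a istar = -(a istar - a i) by ring]
          exact dvd_neg.mpr hdvd
        rw [Int.emod_eq_emod_iff_emod_sub_eq_zero.mpr (Int.emod_eq_zero_of_dvd h1),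
          Int.emod_eq_of_lt (ha0 istar) (ha istar)]
    obtain ⟨f, hf⟩ := exists_flatten m d x hx0 hxlt
    have hfi : f ∈ C i := by
      rw [hC i]; simp only [Set.mem_setOf_eq, hf]; exact hmodi
    have hfs : f ∈ C istar := by
      rw [hC istar]; simp only [Set.mem_setOf_eq, hf]; exact hmods
    exact (Set.disjoint_left.mp (hdisj hi) hfi) hfs
  -- valuation facts
  have hfacts : ∀ i, i ≠ istar →
      padicValInt 2 (a istar - a i) < l i ∧ padicValInt 2 (a istar - a i) < l istar ∧
      ∃ u : ℤ, Odd u ∧ a i = a istar + 2 ^ (padicValInt 2 (a istar - a i)) * u := by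
    intro i hi
    have hnz : a istar - a i ≠ 0 := fun h0 => hkey i hi (h0 ▸ dvd_zero _)
    set e := padicValInt 2 (a istar - a i) with he
    have hdvd : (2:ℤ) ^ e ∣ (a istar - a i) := by
      have h := (padicValInt_dvd_iff (p := 2) e (a istar - a i)).mpr (Or.inr le_rfl)
      exact_mod_cast h
    have hnd : ¬ ((2:ℤ) ^ (e + 1) ∣ (a istar - a i)) := by
      intro hdd
      have h := (padicValInt_dvd_iff (p := 2) (e + 1) (a istar - a i)).mp (by exact_mod_cast hdd)
      rcases h with h | h
      · exact hnz h
      · omega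
    have hlt : e < min (l i) (l istar) := by
      by_contra hge
      push_neg at hge
      exact hkey i hi (dvd_trans (pow_dvd_pow 2 hge) hdvd)
    obtain ⟨u₀, hu₀⟩ := hdvd
    have hodd : Odd u₀ := by
      rw [Int.odd_iff]
      by_contra h
      have h2 : u₀ % 2 = 0 := by omega
      obtain ⟨v, hv⟩ := Int.dvd_of_emod_eq_zero h2
      exact hnd ⟨v, by rw [hu₀, hv]; ring⟩
    exact ⟨lt_of_lt_of_le hlt (min_le_left _ _), lt_of_lt_of_le hlt (min_le_right _ _),
      ⟨-u₀, hodd.neg, by linear_combination -hu₀⟩⟩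
  have hEfact : ∀ e ∈ E, e < l istar ∧ e < d * m := by
    intro e he
    obtain ⟨i, hi', rfl⟩ := Finset.mem_image.mp he
    have hi : i ≠ istar := (Finset.mem_erase.mp hi').1
    obtain ⟨h1, h2, _⟩ := hfacts i hi
    exact ⟨h2, lt_of_lt_of_le h1 (hl i)⟩
  -- the construction
  set T : Finset ℕ → (Fin d → ZMod (2 ^ m)) := fun S q => ∑ e ∈ S, tvec m d e q with hT
  set c : ℕ → ℂ := fun e => Dc (e % m + 1) (-(a istar / 2 ^ (m * (e / m)))) with hc
  set G : (Fin d → ZMod (2 ^ m)) → ℂ :=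
    fun t => ∑ S ∈ E.powerset, ((∏ e ∈ S, c e) / 2 ^ w) * (if t = T S then 1 else 0) with hG
  -- injectivity of T on subsets of E
  have hTsub : ∀ S S' : Finset ℕ, S ⊆ E → S' ⊆ E → T S = T S' → S ⊆ S' := by
    intro S S' hS hS' hTT e₀ he₀
    have he₀E := hS he₀
    have he₀dm : e₀ < d * m := (hEfact e₀ he₀E).2
    have hq₀d : e₀ / m < d := (Nat.div_lt_iff_lt_mul hm0).mpr he₀dm
    set q₀ := e₀ / m with hq₀
    set qF : Fin d := ⟨q₀, hq₀d⟩ with hqF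
    have hred : ∀ U : Finset ℕ, (∑ e ∈ U, tvec m d e qF)
        = ((∑ j ∈ (U.filter (fun e => e / m = q₀)).image (fun e => m - 1 - e % m), 2 ^ j : ℕ)
          : ZMod (2 ^ m)) := by
      intro U
      have hinj : ∀ x ∈ U.filter (fun e => e / m = q₀), ∀ y ∈ U.filter (fun e => e / m = q₀),
          m - 1 - x % m = m - 1 - y % m → x = y := by
        intro x hx y hy hxy
        rw [Finset.mem_filter] at hx hy
        have hx2 : x % m < m := Nat.mod_lt _ hm0
        have hy2 : y % m < m := Nat.mod_lt _ hm0
        have e1 : m * (x / m) + x % m = x := Nat.div_add_mod x m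
        have e2 : m * (y / m) + y % m = y := Nat.div_add_mod y m
        have e3 : x / m = y / m := by rw [hx.2, hy.2]
        have hxy2 : m - 1 - x % m = m - 1 - y % m := hxy
        rw [e3] at e1
        omega
      have h1 : ∑ e ∈ U, tvec m d e qF
          = ∑ e ∈ U, (if e / m = q₀ then (2 : ZMod (2 ^ m)) ^ (m - 1 - e % m) else 0) :=
        Finset.sum_congr rfl (fun e _ => by rw [tvec])
      rw [h1, ← Finset.sum_filter, Finset.sum_image hinj]
      push_cast
      rfl
    have hcoord : (∑ e ∈ S, tvec m d e qF) = ∑ e ∈ S', tvec m d e qF := congrFun hTT qF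
    have hJsub : ∀ U : Finset ℕ,
        (U.filter (fun e => e / m = q₀)).image (fun e => m - 1 - e % m) ⊆ Finset.range m := by
      intro U j hj
      obtain ⟨e', _, rfl⟩ := Finset.mem_image.mp hj
      rw [Finset.mem_range]
      omega
    have hNat : (∑ j ∈ (S.filter (fun e => e / m = q₀)).image (fun e => m - 1 - e % m), 2 ^ j)
        = ∑ j ∈ (S'.filter (fun e => e / m = q₀)).image (fun e => m - 1 - e % m), 2 ^ j := by
      have hcast := hcoord
      rw [hred S, hred S'] at hcast
      have := congrArg ZMod.val hcast
      rwa [ZMod.val_cast_of_lt (sum_two_pow_lt (hJsub S)),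
        ZMod.val_cast_of_lt (sum_two_pow_lt (hJsub S'))] at this
    have hJJ := binrep m _ _ (hJsub S) (hJsub S') hNat
    have he₀f : e₀ ∈ S.filter (fun e => e / m = q₀) := Finset.mem_filter.mpr ⟨he₀, rfl⟩
    have hmem : (m - 1 - e₀ % m) ∈ (S'.filter (fun e => e / m = q₀)).image
        (fun e => m - 1 - e % m) := hJJ ▸ Finset.mem_image_of_mem _ he₀f
    obtain ⟨e₁, he₁f, he₁⟩ := Finset.mem_image.mp hmem
    rw [Finset.mem_filter] at he₁f
    have : e₁ = e₀ := by
      have h1 := Nat.div_add_mod e₁ m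
      have h2 := Nat.div_add_mod e₀ m
      have hx2 : e₁ % m < m := Nat.mod_lt _ hm0
      have hy2 : e₀ % m < m := Nat.mod_lt _ hm0
      have hdd : e₁ / m = e₀ / m := he₁f.2
      have he₁2 : m - 1 - e₁ % m = m - 1 - e₀ % m := he₁
      rw [hdd] at h1
      omega
    exact this ▸ he₁f.1
  have hTinj : ∀ S ∈ E.powerset, ∀ S' ∈ E.powerset, T S = T S' → S = S' := by
    intro S hS S' hS' h
    exact Finset.Subset.antisymm
      (hTsub S S' (Finset.mem_powerset.mp hS) (Finset.mem_powerset.mp hS') h)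
      (hTsub S' S (Finset.mem_powerset.mp hS') (Finset.mem_powerset.mp hS) h.symm)
  -- dft formula
  have hdft : ∀ f, dft (2 ^ m) d G f
      = (∏ e ∈ E, (c e * ch m (∑ q, f q * tvec m d e q) + 1)) / 2 ^ w := by
    intro f
    have h0 : dft (2 ^ m) d G f = ∑ t, G t * ch m (∑ q, f q * t q) := rfl
    rw [h0]
    have h1 : ∀ t : Fin d → ZMod (2 ^ m), G t * ch m (∑ q, f q * t q)
        = ∑ S ∈ E.powerset, ((∏ e ∈ S, c e) / 2 ^ w)
            * (if t = T S then ch m (∑ q, f q * t q) else 0) := by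
      intro t
      rw [hG]
      simp only
      rw [Finset.sum_mul]
      refine Finset.sum_congr rfl fun S _ => ?_
      by_cases hP : t = T S <;> simp [hP]
    rw [Finset.sum_congr rfl (fun t _ => h1 t), Finset.sum_comm]
    have h2 : ∀ S ∈ E.powerset,
        (∑ t : Fin d → ZMod (2 ^ m), ((∏ e ∈ S, c e) / 2 ^ w)
            * (if t = T S then ch m (∑ q, f q * t q) else 0))
        = ((∏ e ∈ S, c e) / 2 ^ w) * ∏ e ∈ S, ch m (∑ q, f q * tvec m d e q) := by
      intro S _
      rw [← Finset.mul_sum]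
      congr 1
      rw [Finset.sum_ite_eq' Finset.univ (T S) (fun t => ch m (∑ q, f q * t q)),
        if_pos (Finset.mem_univ _)]
      have harg : (∑ q, f q * T S q) = ∑ e ∈ S, (∑ q, f q * tvec m d e q) := by
        rw [Finset.sum_comm]
        refine Finset.sum_congr rfl fun q _ => ?_
        rw [← Finset.mul_sum]
      rw [harg, ch_sum]
    rw [Finset.sum_congr rfl h2]
    have h3 : ∀ S ∈ E.powerset,
        ((∏ e ∈ S, c e) / 2 ^ w) * ∏ e ∈ S, ch m (∑ q, f q * tvec m d e q)
        = (∏ e ∈ S, (c e * ch m (∑ q, f q * tvec m d e q))) / 2 ^ w := by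
      intro S _
      rw [Finset.prod_mul_distrib]
      ring
    rw [Finset.sum_congr rfl h3, ← Finset.sum_div]
    congr 1
    rw [Finset.prod_add]
    refine (Finset.sum_congr rfl fun S _ => ?_).symm
    rw [Finset.prod_const_one, mul_one]
  -- factor evaluation
  have hfactor : ∀ e, e < d * m → ∀ f : Fin d → ZMod (2 ^ m), ∀ v K : ℤ,
      flatten (2 ^ m) d f = a istar + 2 ^ e * v + 2 ^ (e + 1) * K →
      (Even v → c e * ch m (∑ q, f q * tvec m d e q) + 1 = 2) ∧
      (Odd v → c e * ch m (∑ q, f q * tvec m d e q) + 1 = 0) := by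
    intro e hedm f v K hfl
    have hq₀d : e / m < d := (Nat.div_lt_iff_lt_mul hm0).mpr hedm
    have hdm : m * (e / m) + e % m = e := Nat.div_add_mod e m
    have hch := ch_tvec m d hm0 e hq₀d f
    have hdiv : flatten (2 ^ m) d f / 2 ^ (m * (e / m))
        = a istar / 2 ^ (m * (e / m)) + 2 ^ (e % m) * (v + 2 * K) := by
      rw [hfl]
      have heq : a istar + 2 ^ e * v + 2 ^ (e + 1) * K
          = a istar + (2 ^ (e % m) * (v + 2 * K)) * 2 ^ (m * (e / m)) := by
        have h1 : (2:ℤ) ^ e = 2 ^ (e % m) * 2 ^ (m * (e / m)) := by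
          rw [← pow_add]; congr 1; omega
        have h2 : (2:ℤ) ^ (e + 1) = 2 * (2 ^ (e % m) * 2 ^ (m * (e / m))) := by
          rw [show e + 1 = 1 + (e % m + m * (e / m)) by omega, pow_add, pow_add, pow_one]
        rw [h1, h2]; ring
      rw [heq, Int.add_mul_ediv_right _ _ (by positivity : ((2:ℤ) ^ (m * (e / m))) ≠ 0)]
    have hinv : c e * Dc (e % m + 1) (a istar / 2 ^ (m * (e / m))) = 1 := by
      simp only [hc]
      rw [← Dc_add, neg_add_cancel, Dc_zero]
    constructor
    · intro hv
      obtain ⟨K', hK'⟩ := hv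
      have harg : a istar / 2 ^ (m * (e / m)) + 2 ^ (e % m) * (v + 2 * K)
          = a istar / 2 ^ (m * (e / m)) + 2 ^ (e % m + 1) * (K' + K) := by
        rw [hK', pow_succ]; ring
      rw [hch, hdiv, harg, Dc_period, hinv]
      norm_num
    · intro hv
      have hvodd : Odd (v + 2 * K) := by
        rcases hv with ⟨K', hK'⟩; exact ⟨K' + K, by omega⟩
      rw [hch, hdiv, Dc_shift_odd _ _ hvodd, mul_neg, hinv]
      ring
  refine ⟨G, ?_, ?_, ?_⟩
  · -- support count
    have hGval : ∀ S ∈ E.powerset, G (T S) = (∏ e ∈ S, c e) / 2 ^ w := by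
      intro S hS
      rw [hG]
      simp only
      rw [Finset.sum_eq_single S]
      · rw [if_pos rfl, mul_one]
      · intro S' hS' hne
        rw [if_neg, mul_zero]
        intro hTS
        exact hne (hTinj S' hS' S hS hTS.symm)
      · intro h; exact absurd hS h
    have hsupp : Function.support G = ↑(E.powerset.image T) := by
      ext t
      simp only [Function.mem_support, Finset.coe_image, Set.mem_image, Finset.mem_coe]
      constructor
      · intro hGt
        by_contra hc'
        push_neg at hc'
        apply hGt
        rw [hG]
        simp only
        apply Finset.sum_eq_zero
        intro S hS
        rw [if_neg, mul_zero]
        intro hts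
        exact hc' S hS hts.symm
      · rintro ⟨S, hS, rfl⟩
        rw [hGval S hS]
        apply div_ne_zero
        · exact Finset.prod_ne_zero_iff.mpr fun e _ => Complex.exp_ne_zero _
        · exact pow_ne_zero _ two_ne_zero
    rw [hsupp, Set.ncard_coe_finset,
      Finset.card_image_of_injOn (fun S hS S' hS' h =>
        hTinj S (Finset.mem_coe.mp hS) S' (Finset.mem_coe.mp hS') h),
      Finset.card_powerset, hw]
  · -- Ĝ = 1 on C istar
    intro f hf
    rw [hC istar] at hf
    have hf' : flatten (2 ^ m) d f % 2 ^ (l istar) = a istar := hf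
    rw [hdft f]
    have hall : ∀ e ∈ E, c e * ch m (∑ q, f q * tvec m d e q) + 1 = 2 := by
      intro e he
      obtain ⟨helstar, hedm⟩ := hEfact e he
      have hfl : flatten (2 ^ m) d f = a istar + 2 ^ e * 0
          + 2 ^ (e + 1) * (2 ^ (l istar - (e + 1)) * (flatten (2 ^ m) d f / 2 ^ (l istar))) := by
        have hsplitK : (2:ℤ) ^ (l istar) = 2 ^ (e + 1) * 2 ^ (l istar - (e + 1)) := by
          rw [← pow_add]; congr 1; omega
        have h2 := Int.emod_add_mul_ediv (flatten (2 ^ m) d f) (2 ^ (l istar))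
        rw [hf'] at h2
        linear_combination (-1 : ℤ) * h2 + (flatten (2 ^ m) d f / 2 ^ (l istar)) * hsplitK
      exact (hfactor e hedm f 0 _ hfl).1 Even.zero
    rw [Finset.prod_congr rfl hall, Finset.prod_const, hw]
    exact div_self (pow_ne_zero _ two_ne_zero)
  · -- Ĝ = 0 on other cones
    intro i hi f hf
    rw [hC i] at hf
    have hf' : flatten (2 ^ m) d f % 2 ^ (l i) = a i := hf
    obtain ⟨hlti, hltstar, u, hu, hai⟩ := hfacts i hi
    set e := padicValInt 2 (a istar - a i) with he
    have heE : e ∈ E := Finset.mem_image.mpr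
      ⟨i, Finset.mem_erase.mpr ⟨hi, Finset.mem_univ i⟩, rfl⟩
    have hedm : e < d * m := lt_of_lt_of_le hlti (hl i)
    have hfl : flatten (2 ^ m) d f = a istar + 2 ^ e * u
        + 2 ^ (e + 1) * (2 ^ (l i - (e + 1)) * (flatten (2 ^ m) d f / 2 ^ (l i))) := by
      have hsplitK : (2:ℤ) ^ (l i) = 2 ^ (e + 1) * 2 ^ (l i - (e + 1)) := by
        rw [← pow_add]; congr 1; omega
      have h2 := Int.emod_add_mul_ediv (flatten (2 ^ m) d f) (2 ^ (l i))
      rw [hf'] at h2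
      linear_combination (-1 : ℤ) * h2 + hai + (flatten (2 ^ m) d f / 2 ^ (l i)) * hsplitK
    rw [hdft f, Finset.prod_eq_zero heE ((hfactor e hedm f u _ hfl).2 hu), zero_div]
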